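/- Let a, b ∈ D with all entries of a in an interval I_a = [u_a, v_a] and all entries of b in an interval I_b = [u_b, v_b], where u_a ≤ u_b, v_a ≤ v_b, and a ≥_τ b. Let e, g ∈ D be such that: (i) e_j ≤ min(a_j, b_j) for every j; (ii) the multiset union of the entries of e and g equals the multiset union of the entries of a and b. Then all entries of e lie in I_a and all entries of g lie in I_b. -/

import Mathlib

def lexGT {n : ℕ} (u v : Fin n → ℕ) : Prop :=
  ∃ i : Fin n, u i < v i ∧ ∀ j : Fin n, j < i → u j = v j

def lexGE {n : ℕ} (u v : Fin n → ℕ) : Prop := u = v ∨ lexGT u v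

def inD {n : ℕ} (m : ℕ) (a : Fin n → ℕ) : Prop :=
  (∀ j, 1 ≤ a j) ∧ StrictMono a ∧ ∀ j, a j ≤ m

/-- The multiset of all entries of a tuple. -/
def entries {n : ℕ} (a : Fin n → ℕ) : Multiset ℕ :=
  Finset.univ.val.map a

/-- Vibrations stay within the unit-interval column index set: if all entries of `a`
lie in `[ua, va]`, all entries of `b` lie in `[ub, vb]` (with `ua ≤ ub`, `va ≤ vb`,
`a ≥_τ b`), and `e, g ∈ D` satisfy `e j ≤ min (a j) (b j)` for all `j` and have the
same combined multiset of entries as `(a, b)`, then all entries of `e` lie in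
`[ua, va]` and all entries of `g` lie in `[ub, vb]`. -/
theorem stmt_10 {n m : ℕ} (ua va ub vb : ℕ)
    (hu : ua ≤ ub) (hv : va ≤ vb)
    (hua : 1 ≤ ua) (hvb : vb ≤ m)
    (a b e g : Fin n → ℕ)
    (ha : inD m a) (hb : inD m b) (he : inD m e) (hg : inD m g)
    (hab : lexGE a b)
    (haI : ∀ j, ua ≤ a j ∧ a j ≤ va)
    (hbI : ∀ j, ub ≤ b j ∧ b j ≤ vb)
    (hemin : ∀ j, e j ≤ min (a j) (b j))
    (hmult : entries e + entries g = entries a + entries b) :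
    (∀ j, ua ≤ e j ∧ e j ≤ va) ∧ (∀ j, ub ≤ g j ∧ g j ≤ vb) := by
  classical
  have hmem : ∀ (f : Fin n → ℕ) (j : Fin n), f j ∈ entries f := fun f j =>
    Multiset.mem_map.2 ⟨j, Finset.mem_val.mpr (Finset.mem_univ j), rfl⟩
  -- lower bound for e
  have helo : ∀ j, ua ≤ e j := by
    intro j
    have h1 : e j ∈ entries a + entries b := by
      rw [← hmult]; exact Multiset.mem_add.2 (Or.inl (hmem e j))
    rcases Multiset.mem_add.1 h1 with h | h
    · obtain ⟨i, _, hi⟩ := Multiset.mem_map.1 h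
      exact hi ▸ (haI i).1
    · obtain ⟨i, _, hi⟩ := Multiset.mem_map.1 h
      exact le_trans hu (hi ▸ (hbI i).1)
  have ghi : ∀ j, g j ≤ vb := by
    intro j
    have h1 : g j ∈ entries a + entries b := by
      rw [← hmult]; exact Multiset.mem_add.2 (Or.inr (hmem g j))
    rcases Multiset.mem_add.1 h1 with h | h
    · obtain ⟨i, _, hi⟩ := Multiset.mem_map.1 h
      exact le_trans (hi ▸ (haI i).2) hv
    · obtain ⟨i, _, hi⟩ := Multiset.mem_map.1 h
      exact hi ▸ (hbI i).2
  -- counting argument for lower bound of g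
  have hcb : Multiset.countP (· < ub) (entries b) = 0 :=
    Multiset.countP_eq_zero.2 (by
      intro x hx
      obtain ⟨i, _, hi⟩ := Multiset.mem_map.1 hx
      simp only [← hi]
      exact not_lt.2 (hbI i).1)
  have hce : Multiset.countP (· < ub) (entries a) ≤ Multiset.countP (· < ub) (entries e) := by
    unfold entries
    rw [Multiset.countP_map, Multiset.countP_map]
    apply Multiset.card_le_card
    exact Multiset.monotone_filter_right _ (fun i hi =>
      lt_of_le_of_lt (le_trans (hemin i) (min_le_left _ _)) hi)
  have hcg : Multiset.countP (· < ub) (entries g) = 0 := by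
    have := congrArg (Multiset.countP (· < ub)) hmult
    rw [Multiset.countP_add, Multiset.countP_add, hcb] at this
    omega
  have glo : ∀ j, ub ≤ g j := by
    intro j
    by_contra h
    exact Multiset.countP_eq_zero.1 hcg _ (hmem g j) (not_le.1 h)
  exact ⟨fun j => ⟨helo j, le_trans (le_trans (hemin j) (min_le_left _ _)) (haI j).2⟩,
    fun j => ⟨glo j, ghi j⟩⟩
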